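/- arXiv:1505.06168 — 2 statements merged into one kernel-verified Lean document; each statement's English description precedes it below -/
import Mathlib

section
/- Let E be a real normed vector space, let X ⊆ E be a finite set, and let θ ≥ 0. For x, y ∈ X, the points x and y lie in the same path-connected component of the union U = ⋃_{z∈X} closedBall(z, θ) if and only if there is a finite sequence x = z₀, z₁, …, z_m = y of points of X with dist(z_{i}, z_{i+1}) ≤ 2θ for all i (i.e., x and y are connected in the Vietoris–Rips graph of X at scale θ). -/
private lemma chain_to_rtg {E : Type*} [PseudoMetricSpace E] {X : Set E} {θ : ℝ}
    {m : ℕ} (z : Fin (m + 1) → E) (hz : ∀ i, z i ∈ X)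
    (hd : ∀ i : Fin m, dist (z i.castSucc) (z i.succ) ≤ 2 * θ) (i : Fin (m + 1)) :
    Relation.ReflTransGen (fun a b => a ∈ X ∧ b ∈ X ∧ dist a b ≤ 2 * θ) (z 0) (z i) := by
  induction i using Fin.induction with
  | zero => exact .refl
  | succ j ih => exact ih.tail ⟨hz _, hz _, hd j⟩

private lemma rtg_to_chain {E : Type*} [PseudoMetricSpace E] {X : Set E} {θ : ℝ}
    {x y : E} (hx : x ∈ X)
    (h : Relation.ReflTransGen (fun a b => a ∈ X ∧ b ∈ X ∧ dist a b ≤ 2 * θ) x y) :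
    ∃ m : ℕ, ∃ z : Fin (m + 1) → E, (∀ i, z i ∈ X) ∧ z 0 = x ∧ z (Fin.last m) = y ∧
      ∀ i : Fin m, dist (z i.castSucc) (z i.succ) ≤ 2 * θ := by
  induction h with
  | refl => exact ⟨0, fun _ => x, fun _ => hx, rfl, rfl, fun i => i.elim0⟩
  | @tail b c hab hbc ih =>
    obtain ⟨m, z, hz, h0, hl, hd⟩ := ih
    refine ⟨m + 1, Fin.snoc z c, ?_, ?_, ?_, ?_⟩
    · intro i
      induction i using Fin.lastCases with
      | last => simpa [Fin.snoc_last] using hbc.2.1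
      | cast j => simpa [Fin.snoc_castSucc] using hz j
    · rw [show (0 : Fin (m + 2)) = Fin.castSucc 0 from rfl, Fin.snoc_castSucc]; exact h0
    · simp
    · intro i
      induction i using Fin.lastCases with
      | last =>
        rw [Fin.succ_last, Fin.snoc_last, Fin.snoc_castSucc, hl]
        exact hbc.2.2
      | cast j =>
        rw [Fin.succ_castSucc, Fin.snoc_castSucc, Fin.snoc_castSucc]; exact hd j

private lemma segment_subset_balls {E : Type*} [NormedAddCommGroup E] [NormedSpace ℝ E]
    {b c : E} {θ : ℝ} (h : dist b c ≤ 2 * θ) :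
    segment ℝ b c ⊆ Metric.closedBall b θ ∪ Metric.closedBall c θ := by
  rintro p ⟨a, t, ha, ht, hat, rfl⟩
  have hd : (0 : ℝ) ≤ dist b c := dist_nonneg
  rcases le_or_gt t (1 / 2) with h2 | h2
  · left
    have hpb : a • b + t • c - b = t • (c - b) := by
      rw [show a = 1 - t by linarith]; module
    rw [Metric.mem_closedBall, dist_eq_norm, hpb, norm_smul, Real.norm_of_nonneg ht]
    have : ‖c - b‖ = dist b c := by rw [dist_eq_norm, norm_sub_rev]
    rw [this]
    nlinarith
  · right
    have hpc : a • b + t • c - c = a • (b - c) := by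
      rw [show t = 1 - a by linarith]; module
    rw [Metric.mem_closedBall, dist_eq_norm, hpc, norm_smul, Real.norm_of_nonneg ha]
    have : ‖b - c‖ = dist b c := dist_eq_norm b c ▸ rfl
    rw [this]
    nlinarith

/-- For a finite set `X` in a real normed vector space and `θ ≥ 0`, two points `x, y ∈ X`
lie in the same path-connected component of the union `U = ⋃ z ∈ X, closedBall z θ`
if and only if they are connected by a chain `x = z₀, z₁, …, z_m = y` of points of `X`
with consecutive distances at most `2θ` (i.e. connected in the Vietoris–Rips graph). -/
theorem joinedIn_union_closedBall_iff_vietorisRips_chain {E : Type*} [NormedAddCommGroup E]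
    [NormedSpace ℝ E] (X : Set E) (hX : X.Finite) (θ : ℝ) (hθ : 0 ≤ θ)
    (x y : E) (hx : x ∈ X) (hy : y ∈ X) :
    JoinedIn (⋃ z ∈ X, Metric.closedBall z θ) x y ↔
      ∃ m : ℕ, ∃ z : Fin (m + 1) → E, (∀ i, z i ∈ X) ∧ z 0 = x ∧ z (Fin.last m) = y ∧
        ∀ i : Fin m, dist (z i.castSucc) (z i.succ) ≤ 2 * θ := by
  set U := ⋃ z ∈ X, Metric.closedBall z θ with hU
  set r : E → E → Prop := fun a b => a ∈ X ∧ b ∈ X ∧ dist a b ≤ 2 * θ with hrdef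
  constructor
  · rintro ⟨γ, hγ⟩
    -- partition U into the part reachable from x and the rest
    set S : Set E := {w ∈ X | Relation.ReflTransGen r x w} with hSdef
    set A : Set E := ⋃ z ∈ S, Metric.closedBall z θ with hAdef
    set B : Set E := ⋃ z ∈ X \ S, Metric.closedBall z θ with hBdef
    have hSX : S ⊆ X := fun w hw => hw.1
    have hAclosed : IsClosed A :=
      (hX.subset hSX).isClosed_biUnion fun _ _ => Metric.isClosed_closedBall
    have hBclosed : IsClosed B :=
      (hX.subset Set.diff_subset).isClosed_biUnion fun _ _ => Metric.isClosed_closedBall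
    have hUAB : U ⊆ A ∪ B := by
      intro p hp
      rw [hU, Set.mem_iUnion₂] at hp
      obtain ⟨w, hw, hpw⟩ := hp
      by_cases hws : w ∈ S
      · exact Or.inl (Set.mem_biUnion hws hpw)
      · exact Or.inr (Set.mem_biUnion ⟨hw, hws⟩ hpw)
    have hABempty : A ∩ B = ∅ := by
      ext p
      simp only [Set.mem_inter_iff, Set.mem_empty_iff_false, iff_false, not_and]
      intro hpA hpB
      rw [hAdef, Set.mem_iUnion₂] at hpA
      rw [hBdef, Set.mem_iUnion₂] at hpB
      obtain ⟨w, hw, hpw⟩ := hpA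
      obtain ⟨v, hv, hpv⟩ := hpB
      have hdwv : dist w v ≤ 2 * θ := by
        calc dist w v ≤ dist w p + dist p v := dist_triangle _ _ _
        _ ≤ θ + θ := add_le_add (Metric.mem_closedBall'.mp hpw) (Metric.mem_closedBall.mp hpv)
        _ = 2 * θ := by ring
      exact hv.2 ⟨hv.1, hw.2.tail ⟨hw.1, hv.1, hdwv⟩⟩
    have hs : IsPreconnected (Set.range γ) := isPreconnected_range γ.continuous
    have hsub : Set.range γ ⊆ A ∪ B := by
      rintro p ⟨t, ht⟩
      exact hUAB (ht ▸ hγ t)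
    have hxA : x ∈ A :=
      Set.mem_biUnion ⟨hx, Relation.ReflTransGen.refl⟩ (Metric.mem_closedBall_self hθ)
    have hxrange : x ∈ Set.range γ := ⟨0, γ.source⟩
    have hyrange : y ∈ Set.range γ := ⟨1, γ.target⟩
    have hyA : y ∈ A := by
      by_contra hyB
      have hyB' : y ∈ B := (hsub hyrange).resolve_left hyB
      have := isPreconnected_closed_iff.mp hs A B hAclosed hBclosed hsub
        ⟨x, hxrange, hxA⟩ ⟨y, hyrange, hyB'⟩
      rw [hABempty] at this
      simp at this
    rw [hAdef, Set.mem_iUnion₂] at hyA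
    obtain ⟨w, hw, hyw⟩ := hyA
    have hwy : dist w y ≤ 2 * θ := le_trans (Metric.mem_closedBall'.mp hyw) (by linarith)
    exact rtg_to_chain hx (hw.2.tail ⟨hw.1, hy, hwy⟩)
  · rintro ⟨m, z, hz, h0, hl, hd⟩
    have hrtg : Relation.ReflTransGen r x y := by
      have := chain_to_rtg z hz hd (Fin.last m)
      rwa [h0, hl] at this
    clear hd hl h0 hz hy
    induction hrtg with
    | refl => exact JoinedIn.refl (Set.mem_biUnion hx (Metric.mem_closedBall_self hθ))
    | @tail b c hab hbc ih =>
      refine ih.trans (JoinedIn.of_segment_subset ((segment_subset_balls hbc.2.2).trans ?_))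
      rw [hU]
      exact Set.union_subset
        (Set.subset_biUnion_of_mem (u := fun z => Metric.closedBall z θ) hbc.1)
        (Set.subset_biUnion_of_mem (u := fun z => Metric.closedBall z θ) hbc.2.1)
end

section
/- Let β, ν, α, χ ∈ ℝ, let λ > 0 and set κ = 2π/λ. Let ω : ℝ × ℝ × ℝ → ℝ be a function of (x, y, t) that is twice differentiable in (x, y) and differentiable in t, and let u = (u₁, u₂) : ℝ × ℝ × ℝ → ℝ² be differentiable in (x, y). Suppose that at every point: (i) ∂ω/∂t + β(u₁ ∂ω/∂x + u₂ ∂ω/∂y) = ν(∂²ω/∂x² + ∂²ω/∂y²) − αω + χκ cos(κy); (ii) ∂u₁/∂x + ∂u₂/∂y = 0; and (iii) ω = ∂u₂/∂x − ∂u₁/∂y. Then the transformed fields ω′(x, y, t) = −ω(−x, y + λ/2, t) and u′(x, y, t) = (−u₁(−x, y + λ/2, t), u₂(−x, y + λ/2, t)) also satisfy (i), (ii), and (iii) at every point. -/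
/-- The vorticity formulation of the generalized Kolmogorov flow with forcing wavenumber
`κ = 2π/λ`, `∂ω/∂t + β u·∇ω = ν ∇²ω − αω + χκ cos(κ y)`, together with incompressibility
`∂u₁/∂x + ∂u₂/∂y = 0` and the vorticity relation `ω = ∂u₂/∂x − ∂u₁/∂y`, is invariant
under the combined reflection and half-wavelength shift `D(x, y) = (−x, y + λ/2)`, with
`ω'(x,y,t) = −ω(−x, y + λ/2, t)` and `u'(x,y,t) = (−u₁(−x, y + λ/2, t), u₂(−x, y + λ/2, t))`. -/
theorem kolmogorov_vorticity_invariant_reflection_shift (β ν α χ : ℝ) (lam : ℝ)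
    (hlam : 0 < lam) (κ : ℝ) (hκ : κ = 2 * Real.pi / lam)
    (ω u₁ u₂ : ℝ → ℝ → ℝ → ℝ)
    (hω2 : ∀ t, Differentiable ℝ (fun p : ℝ × ℝ => ω p.1 p.2 t) ∧
      Differentiable ℝ (fderiv ℝ (fun p : ℝ × ℝ => ω p.1 p.2 t)))
    (hωt : ∀ x y, Differentiable ℝ (fun s => ω x y s))
    (hu : ∀ t, Differentiable ℝ (fun p : ℝ × ℝ => (u₁ p.1 p.2 t, u₂ p.1 p.2 t)))
    (heq : ∀ x y t,
      deriv (fun s => ω x y s) t +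
        β * (u₁ x y t * deriv (fun s => ω s y t) x + u₂ x y t * deriv (fun s => ω x s t) y) =
      ν * (deriv (fun s => deriv (fun r => ω r y t) s) x +
           deriv (fun s => deriv (fun r => ω x r t) s) y) -
        α * ω x y t + χ * κ * Real.cos (κ * y))
    (hdiv : ∀ x y t, deriv (fun s => u₁ s y t) x + deriv (fun s => u₂ x s t) y = 0)
    (hvort : ∀ x y t, ω x y t = deriv (fun s => u₂ s y t) x - deriv (fun s => u₁ x s t) y) :
    (∀ x y t,
      deriv (fun s => -ω (-x) (y + lam / 2) s) t +
        β * ((-u₁ (-x) (y + lam / 2) t) * deriv (fun s => -ω (-s) (y + lam / 2) t) x +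
             u₂ (-x) (y + lam / 2) t * deriv (fun s => -ω (-x) (s + lam / 2) t) y) =
      ν * (deriv (fun s => deriv (fun r => -ω (-r) (y + lam / 2) t) s) x +
           deriv (fun s => deriv (fun r => -ω (-x) (r + lam / 2) t) s) y) -
        α * (-ω (-x) (y + lam / 2) t) + χ * κ * Real.cos (κ * y)) ∧
    (∀ x y t,
      deriv (fun s => -u₁ (-s) (y + lam / 2) t) x +
        deriv (fun s => u₂ (-x) (s + lam / 2) t) y = 0) ∧
    (∀ x y t, -ω (-x) (y + lam / 2) t =
      deriv (fun s => u₂ (-s) (y + lam / 2) t) x -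
        deriv (fun s => -u₁ (-x) (s + lam / 2) t) y) := by
  have dneg : ∀ (f : ℝ → ℝ) (x : ℝ), deriv (fun s => f (-s)) x = -deriv f (-x) :=
    fun f x => deriv_comp_neg f x
  have dnegneg : ∀ (f : ℝ → ℝ) (x : ℝ), deriv (fun s => -f (-s)) x = deriv f (-x) := by
    intro f x
    have := deriv_comp_neg (fun r => -f r) x
    simpa [deriv.neg] using this
  have dshift : ∀ (f : ℝ → ℝ) (c x : ℝ), deriv (fun s => f (s + c)) x = deriv f (x + c) :=
    fun f c x => deriv_comp_add_const f c x
  have dnshift : ∀ (f : ℝ → ℝ) (c x : ℝ), deriv (fun s => -f (s + c)) x = -deriv f (x + c) := by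
    intro f c x
    have := deriv_comp_add_const (fun r => -f r) c x
    simpa [deriv.neg] using this
  have hcos : ∀ y : ℝ, Real.cos (κ * (y + lam / 2)) = -Real.cos (κ * y) := by
    intro y
    have hklam : κ * (lam / 2) = Real.pi := by
      field_simp [hκ]
      rw [hκ, div_mul_cancel₀ _ hlam.ne']
    have : κ * (y + lam / 2) = κ * y + Real.pi := by rw [← hklam]; ring
    rw [this, Real.cos_add_pi]
  refine ⟨?_, ?_, ?_⟩
  · intro x y t
    have h := heq (-x) (y + lam / 2) t
    have e1 : deriv (fun s => -ω (-x) (y + lam / 2) s) t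
        = -deriv (fun s => ω (-x) (y + lam / 2) s) t := deriv.neg
    have e2 : deriv (fun s => -ω (-s) (y + lam / 2) t) x
        = deriv (fun s => ω s (y + lam / 2) t) (-x) := dnegneg (fun s => ω s (y + lam / 2) t) x
    have e3 : deriv (fun s => -ω (-x) (s + lam / 2) t) y
        = -deriv (fun s => ω (-x) s t) (y + lam / 2) := dnshift (fun s => ω (-x) s t) _ y
    have e4 : deriv (fun s => deriv (fun r => -ω (-r) (y + lam / 2) t) s) x
        = -deriv (fun s => deriv (fun r => ω r (y + lam / 2) t) s) (-x) := by
      have hfun : (fun s => deriv (fun r => -ω (-r) (y + lam / 2) t) s)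
          = fun s => deriv (fun r => ω r (y + lam / 2) t) (-s) := by
        funext s; exact dnegneg (fun r => ω r (y + lam / 2) t) s
      rw [hfun]; exact dneg _ x
    have e5 : deriv (fun s => deriv (fun r => -ω (-x) (r + lam / 2) t) s) y
        = -deriv (fun s => deriv (fun r => ω (-x) r t) s) (y + lam / 2) := by
      have hfun : (fun s => deriv (fun r => -ω (-x) (r + lam / 2) t) s)
          = fun s => -deriv (fun r => ω (-x) r t) (s + lam / 2) := by
        funext s; exact dnshift (fun r => ω (-x) r t) _ s
      rw [hfun]
      have := deriv_comp_add_const (fun r => -deriv (fun r' => ω (-x) r' t) r) (lam / 2) y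
      simpa [deriv.neg] using this
    rw [e1, e2, e3, e4, e5]
    rw [hcos y] at h
    linarith
  · intro x y t
    have h := hdiv (-x) (y + lam / 2) t
    have e1 : deriv (fun s => -u₁ (-s) (y + lam / 2) t) x
        = deriv (fun s => u₁ s (y + lam / 2) t) (-x) := dnegneg (fun s => u₁ s (y + lam / 2) t) x
    have e2 : deriv (fun s => u₂ (-x) (s + lam / 2) t) y
        = deriv (fun s => u₂ (-x) s t) (y + lam / 2) := dshift (fun s => u₂ (-x) s t) _ y
    rw [e1, e2]; linarith
  · intro x y t
    have h := hvort (-x) (y + lam / 2) t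
    have e1 : deriv (fun s => u₂ (-s) (y + lam / 2) t) x
        = -deriv (fun s => u₂ s (y + lam / 2) t) (-x) := dneg (fun s => u₂ s (y + lam / 2) t) x
    have e2 : deriv (fun s => -u₁ (-x) (s + lam / 2) t) y
        = -deriv (fun s => u₁ (-x) s t) (y + lam / 2) := dnshift (fun s => u₁ (-x) s t) _ y
    rw [e1, e2]; linarith
end
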